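/- If a finite tree admits a perfect matching, then this perfect matching is unique. -/

import Mathlib

open scoped Classical

/-- A matching of a graph `G`: a set of edges of `G`, pairwise vertex-disjoint. -/
def IsMatching {V : Type} (G : SimpleGraph V) (M : Finset (Sym2 V)) : Prop :=
  (∀ e ∈ M, e ∈ G.edgeSet) ∧
  ∀ e ∈ M, ∀ f ∈ M, e ≠ f → ∀ v : V, v ∈ e → v ∉ f

/-- A vertex is covered by a matching if it belongs to some edge of it. -/
def Covers {V : Type} (M : Finset (Sym2 V)) (v : V) : Prop := ∃ e ∈ M, v ∈ e

lemma key_parity {V : Type} [Fintype V] [DecidableEq V]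
    (G : SimpleGraph V) (hac : G.IsAcyclic) (u v : V) (huv : G.Adj u v)
    (M : Finset (Sym2 V)) (hM : IsMatching G M) (hperf : ∀ w : V, Covers M w) :
    (s(u,v) ∈ M ↔
      Odd (Finset.univ.filter
        (fun w => (G.deleteEdges {s(u,v)}).Reachable u w)).card) := by
  set e : Sym2 V := s(u,v) with he
  set D : SimpleGraph V := G.deleteEdges {e} with hD
  set A : Finset V := Finset.univ.filter (fun w => D.Reachable u w) with hA
  have hmemA : ∀ w : V, w ∈ A ↔ D.Reachable u w := by
    intro w; simp [hA]
  have huA : u ∈ A := (hmemA u).2 (SimpleGraph.Reachable.refl u)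
  have hvA : v ∉ A := by
    have hb : G.IsBridge s(u,v) :=
      (SimpleGraph.isAcyclic_iff_forall_adj_isBridge.mp hac) huv
    rw [SimpleGraph.isBridge_iff] at hb
    intro hv
    exact hb ((hmemA v).1 hv)
  -- choice function
  have hg : ∀ w : V, ∃ f, f ∈ M ∧ w ∈ f := fun w => by
    obtain ⟨f, hf, hw⟩ := hperf w; exact ⟨f, hf, hw⟩
  choose g hgM hgmem using hg
  have hgunique : ∀ w : V, ∀ f ∈ M, w ∈ f → g w = f := by
    intro w f hf hwf
    by_contra hne
    exact hM.2 (g w) (hgM w) f hf hne w (hgmem w) hwf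
  -- edges of M other than e stay inside/outside A
  have htransfer : ∀ a b : V, s(a,b) ∈ M → s(a,b) ≠ e → a ∈ A → b ∈ A := by
    intro a b hab hne ha
    have hedge : s(a,b) ∈ D.edgeSet := by
      rw [hD, SimpleGraph.edgeSet_deleteEdges]
      exact ⟨hM.1 _ hab, by simpa using hne⟩
    have hadj : D.Adj a b := (SimpleGraph.mem_edgeSet _).1 hedge
    exact (hmemA b).2 (((hmemA a).1 ha).trans hadj.reachable)
  have hcard : A.card = ∑ f ∈ M, (A.filter (fun w => g w = f)).card :=
    Finset.card_eq_sum_card_fiberwise (fun w _ => hgM w)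
  have hfiber : ∀ f ∈ M, A.filter (fun w => g w = f) = A.filter (fun w => w ∈ f) := by
    intro f hf
    apply Finset.filter_congr
    intro w _
    constructor
    · rintro rfl; exact hgmem w
    · intro hwf; exact hgunique w f hf hwf
  have hfiber_even : ∀ f ∈ M, f ≠ e → Even (A.filter (fun w => g w = f)).card := by
    intro f hf hne
    rw [hfiber f hf]
    induction f using Sym2.ind with
    | _ a b =>
      have hadjab : G.Adj a b := (SimpleGraph.mem_edgeSet _).1 (hM.1 _ hf)
      have hab : a ≠ b := hadjab.ne
      by_cases ha : a ∈ A
      · have hb : b ∈ A := htransfer a b hf hne ha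
        have : A.filter (fun w => w ∈ s(a,b)) = {a, b} := by
          ext w
          simp only [Finset.mem_filter, Sym2.mem_iff, Finset.mem_insert,
            Finset.mem_singleton]
          constructor
          · rintro ⟨_, h⟩; exact h
          · rintro (rfl | rfl)
            · exact ⟨ha, Or.inl rfl⟩
            · exact ⟨hb, Or.inr rfl⟩
        rw [this, Finset.card_insert_of_notMem (by simpa using hab),
          Finset.card_singleton]
        exact ⟨1, rfl⟩
      · have hb : b ∉ A := fun hb => ha (htransfer b a (by rwa [Sym2.eq_swap] at hf)
          (by rwa [Sym2.eq_swap]) hb)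
        have : A.filter (fun w => w ∈ s(a,b)) = ∅ := by
          ext w
          simp only [Finset.mem_filter, Sym2.mem_iff, Finset.notMem_empty, iff_false]
          rintro ⟨hw, (rfl | rfl)⟩
          · exact ha hw
          · exact hb hw
        rw [this]
        simp
  by_cases heM : e ∈ M
  · apply iff_of_true heM
    have hfe : A.filter (fun w => g w = e) = {u} := by
      rw [hfiber e heM]
      ext w
      simp only [Finset.mem_filter, he, Sym2.mem_iff, Finset.mem_singleton]
      constructor
      · rintro ⟨hw, (rfl | rfl)⟩
        · rfl
        · exact absurd hw hvA
      · rintro rfl; exact ⟨huA, Or.inl rfl⟩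
    rw [hcard, ← Finset.add_sum_erase M _ heM, hfe, Finset.card_singleton]
    have heven : Even (∑ f ∈ M.erase e, (A.filter (fun w => g w = f)).card) :=
      Finset.even_sum _ fun f hf =>
        hfiber_even f (Finset.mem_of_mem_erase hf) (Finset.ne_of_mem_erase hf)
    obtain ⟨k, hk⟩ := heven
    rw [hk]
    exact ⟨k, by ring⟩
  · apply iff_of_false heM
    rw [Nat.not_even_iff_odd.symm, hcard, not_not]
    exact (Finset.even_sum _ fun f hf => hfiber_even f hf (fun hfe => heM (hfe ▸ hf)))

/-- A finite tree admits at most one perfect matching. -/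
theorem tree_perfect_matching_unique {V : Type} [Fintype V] [DecidableEq V]
    (G : SimpleGraph V) (hT : G.IsTree) (M M' : Finset (Sym2 V))
    (hM : IsMatching G M) (hMperf : ∀ v : V, Covers M v)
    (hM' : IsMatching G M') (hM'perf : ∀ v : V, Covers M' v) :
    M = M' := by
  have hac := hT.IsAcyclic
  ext e
  induction e using Sym2.ind with
  | _ u v =>
    constructor
    · intro h
      have huv : G.Adj u v := (SimpleGraph.mem_edgeSet _).1 (hM.1 _ h)
      exact (key_parity G hac u v huv M' hM' hM'perf).2
        ((key_parity G hac u v huv M hM hMperf).1 h)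
    · intro h
      have huv : G.Adj u v := (SimpleGraph.mem_edgeSet _).1 (hM'.1 _ h)
      exact (key_parity G hac u v huv M hM hMperf).2
        ((key_parity G hac u v huv M' hM' hM'perf).1 h)
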